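/- Let (X,d) be a finite metric space, τ : X → ℝ, and L₁, L₂ > 0 such that for all x, y ∈ X: d(x,y) ≤ L₁·|τ(x) − τ(y)| and |τ(x) − τ(y)| ≤ L₂·d(x,y). Then for every u ∈ X and every R > 0 there exists a set C ⊆ X with |C| ≤ ⌈8·L₁·L₂⌉ such that the closed ball {x : d(u,x) ≤ R} is contained in ⋃_{c ∈ C} {x : d(c,x) ≤ R/2}. In particular, the doubling constant of X is at most ⌈8ρ⌉ where ρ = L₁·L₂ is the distortion of τ. -/

import Mathlib

/-- Lemma `path-embedding-vs-doubling-dim`: a finite metric space admitting an embedding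
into the real line with distortion `ρ = L₁·L₂` has doubling constant at most `⌈8ρ⌉`:
every closed ball of radius `R` is covered by at most `⌈8·L₁·L₂⌉` closed balls of
radius `R/2`. -/
theorem path_embedding_doubling_constant
    {X : Type*} [MetricSpace X] [Fintype X]
    (τ : X → ℝ) (L₁ L₂ : ℝ) (hL₁ : 0 < L₁) (hL₂ : 0 < L₂)
    (h1 : ∀ x y : X, dist x y ≤ L₁ * |τ x - τ y|)
    (h2 : ∀ x y : X, |τ x - τ y| ≤ L₂ * dist x y) :
    ∀ (u : X) (R : ℝ), 0 < R →
      ∃ C : Finset X, C.card ≤ ⌈8 * L₁ * L₂⌉₊ ∧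
        Metric.closedBall u R ⊆ ⋃ c ∈ C, Metric.closedBall c (R / 2) := by
  intro u R hR
  classical
  by_cases hsub : ∀ x y : X, x = y
  · -- degenerate case: all points equal
    refine ⟨{u}, ?_, ?_⟩
    · have h8 : (0:ℝ) < 8 * L₁ * L₂ := by positivity
      simp only [Finset.card_singleton]
      exact Nat.ceil_pos.mpr h8
    · intro x hx
      have hxu : x = u := hsub x u
      subst hxu
      simp only [Set.mem_iUnion]
      exact ⟨x, Finset.mem_singleton_self x, by
        simp [Metric.mem_closedBall]; positivity⟩
  · -- there exist two distinct points, so ρ = L₁ L₂ ≥ 1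
    push_neg at hsub
    obtain ⟨a, b, hab⟩ := hsub
    have hρ1 : 1 ≤ L₁ * L₂ := by
      have hd : 0 < dist a b := dist_pos.mpr hab
      have : dist a b ≤ L₁ * (L₂ * dist a b) :=
        le_trans (h1 a b) (by
          have := h2 a b
          nlinarith)
      nlinarith
    set ℓ : ℝ := R / (2 * L₁) with hℓ
    have hℓpos : 0 < ℓ := by positivity
    set key : X → ℤ := fun x => ⌊(τ x - τ u) / ℓ⌋ with hkey
    set S : Finset X := Finset.univ.filter (fun x => dist x u ≤ R) with hS
    set rep : ℤ → X := fun i =>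
      if h : ∃ x ∈ S, key x = i then h.choose else u with hrep
    set T : Finset ℤ := S.image key with hT
    refine ⟨T.image rep, ?_, ?_⟩
    · -- cardinality bound
      have hTsub : T ⊆ Finset.Icc ⌊-(2 * (L₁ * L₂))⌋ ⌊2 * (L₁ * L₂)⌋ := by
        intro i hi
        simp only [hT, Finset.mem_image] at hi
        obtain ⟨x, hx, hxi⟩ := hi
        have hxd : dist x u ≤ R := by
          simpa [hS] using hx
        have hτ : |τ x - τ u| ≤ L₂ * R :=
          le_trans (h2 x u) (by nlinarith)
        have habs := abs_le.mp hτ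
        have hℓR : 2 * (L₁ * L₂) * ℓ = L₂ * R := by
          rw [hℓ]; field_simp
        have hub : (τ x - τ u) / ℓ ≤ 2 * (L₁ * L₂) := by
          rw [div_le_iff₀ hℓpos, hℓR]
          exact habs.2
        have hlb : -(2 * (L₁ * L₂)) ≤ (τ x - τ u) / ℓ := by
          rw [le_div_iff₀ hℓpos, neg_mul, hℓR]
          linarith [habs.1]
        rw [Finset.mem_Icc, ← hxi]
        constructor
        · exact Int.le_floor.mpr (le_trans (Int.floor_le _) hlb)
        · exact Int.floor_le_floor hub
      have hcard : (T.image rep).card ≤ (Finset.Icc ⌊-(2 * (L₁ * L₂))⌋ ⌊2 * (L₁ * L₂)⌋).card :=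
        le_trans Finset.card_image_le (Finset.card_le_card hTsub)
      have hIcc : (Finset.Icc ⌊-(2 * (L₁ * L₂))⌋ ⌊2 * (L₁ * L₂)⌋).card
          = (⌊2 * (L₁ * L₂)⌋ + 1 - ⌊-(2 * (L₁ * L₂))⌋).toNat := by
        simp [Int.card_Icc]
      have hreal : ((⌊2 * (L₁ * L₂)⌋ + 1 - ⌊-(2 * (L₁ * L₂))⌋).toNat : ℝ) ≤ 8 * L₁ * L₂ := by
        have h8 : (0:ℝ) < 8 * L₁ * L₂ := by positivity
        rcases le_or_gt (⌊2 * (L₁ * L₂)⌋ + 1 - ⌊-(2 * (L₁ * L₂))⌋) 0 with h | h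
        · rw [Int.toNat_of_nonpos h]; simpa using h8.le
        · have hc1 : ((⌊2 * (L₁ * L₂)⌋ + 1 - ⌊-(2 * (L₁ * L₂))⌋).toNat : ℤ)
              = ⌊2 * (L₁ * L₂)⌋ + 1 - ⌊-(2 * (L₁ * L₂))⌋ := Int.toNat_of_nonneg h.le
          have hc2 : ((⌊2 * (L₁ * L₂)⌋ + 1 - ⌊-(2 * (L₁ * L₂))⌋).toNat : ℝ)
              = (⌊2 * (L₁ * L₂)⌋ : ℝ) + 1 - (⌊-(2 * (L₁ * L₂))⌋ : ℝ) := by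
            exact_mod_cast congrArg (fun z : ℤ => (z : ℝ)) hc1
          rw [hc2]
          have h1' : (⌊2 * (L₁ * L₂)⌋ : ℝ) ≤ 2 * (L₁ * L₂) := Int.floor_le _
          have h2' : -(2 * (L₁ * L₂)) - 1 < (⌊-(2 * (L₁ * L₂))⌋ : ℝ) := Int.sub_one_lt_floor _
          nlinarith
      calc (T.image rep).card ≤ (⌊2 * (L₁ * L₂)⌋ + 1 - ⌊-(2 * (L₁ * L₂))⌋).toNat := by
              rw [← hIcc]; exact hcard
        _ ≤ ⌈8 * L₁ * L₂⌉₊ := by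
              have := Nat.le_ceil (8 * L₁ * L₂)
              exact_mod_cast le_trans hreal this
    · -- covering
      intro x hx
      have hxd : dist x u ≤ R := Metric.mem_closedBall.mp hx
      have hxS : x ∈ S := by simpa [hS] using hxd
      have hkeyT : key x ∈ T := Finset.mem_image_of_mem key hxS
      have hex : ∃ y ∈ S, key y = key x := ⟨x, hxS, rfl⟩
      set c := rep (key x) with hc
      have hcspec : rep (key x) ∈ S ∧ key (rep (key x)) = key x := by
        rw [hrep]
        simp only [hex, dif_pos]
        exact ⟨hex.choose_spec.1, hex.choose_spec.2⟩
      simp only [Set.mem_iUnion]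
      refine ⟨c, Finset.mem_image_of_mem rep hkeyT, ?_⟩
      -- same floor ⇒ close
      have hfl : ⌊(τ c - τ u) / ℓ⌋ = ⌊(τ x - τ u) / ℓ⌋ := hcspec.2
      have habs : |(τ c - τ u) / ℓ - (τ x - τ u) / ℓ| < 1 :=
        Int.abs_sub_lt_one_of_floor_eq_floor hfl
      have hdiff : |(τ c - τ x)| / ℓ < 1 := by
        have : (τ c - τ u) / ℓ - (τ x - τ u) / ℓ = (τ c - τ x) / ℓ := by ring
        rw [this, abs_div, abs_of_pos hℓpos] at habs
        exact habs
      have hττ : |τ c - τ x| < ℓ := by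
        rwa [div_lt_one hℓpos] at hdiff
      have : dist c x ≤ L₁ * |τ c - τ x| := h1 c x
      have hfin : dist c x < L₁ * ℓ := lt_of_le_of_lt this (by nlinarith)
      have : L₁ * ℓ = R / 2 := by rw [hℓ]; field_simp
      rw [Metric.mem_closedBall, dist_comm]
      linarith [hfin, this.symm ▸ hfin]
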